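/- Let N ≥ 2, c > 0, q ∈ (0,1), K ≥ 1 an integer, R > 0, b > 0, σ² > 0, and channel gains h₁,…,h_N > 0. Define f(γ) = e^{−c/γ}, ρ(γ) = q(1 − f(γ))/((1 − q)f(γ)), Π_K(ρ) = ρ^K/Σ_{j=0}^{K} ρ^j, Φ(γ) = (1 − f(γ))Π_K(ρ(γ)), γ_i(p) = p_i h_i/(σ² + Σ_{j≠i} p_j h_j), and χ_i(p) = R q (1 − Φ(γ_i(p))) / ( b + p_i q (1 − Φ(γ_i(p)))/f(γ_i(p)) ). Then for fixed p_i > 0 and fixed powers of the users other than i and j, the map p_j ↦ χ_i(p) is strictly decreasing on [0,∞) for every j ≠ i. -/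

import Mathlib

noncomputable def fE (c γ : ℝ) : ℝ := Real.exp (-c / γ)
noncomputable def ρE (c q γ : ℝ) : ℝ := q * (1 - fE c γ) / ((1 - q) * fE c γ)
noncomputable def PiE (K : ℕ) (r : ℝ) : ℝ := r ^ K / ∑ m ∈ Finset.range (K + 1), r ^ m
noncomputable def ΦE (c q : ℝ) (K : ℕ) (γ : ℝ) : ℝ := (1 - fE c γ) * PiE K (ρE c q γ)

lemma fE_pos (c γ : ℝ) : 0 < fE c γ := Real.exp_pos _

lemma fE_lt_one {c γ : ℝ} (hc : 0 < c) (hγ : 0 < γ) : fE c γ < 1 := by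
  have : -c / γ < 0 := div_neg_of_neg_of_pos (by linarith) hγ
  simpa [fE] using Real.exp_lt_one_iff.mpr this

lemma fE_lt {c γ1 γ2 : ℝ} (hc : 0 < c) (h1 : 0 < γ1) (h12 : γ1 < γ2) :
    fE c γ1 < fE c γ2 := by
  have : c / γ2 < c / γ1 := div_lt_div_of_pos_left hc h1 h12
  have : -c / γ1 < -c / γ2 := by
    rw [neg_div, neg_div]; linarith
  exact Real.exp_lt_exp.mpr this

lemma ρE_pos {c q γ : ℝ} (hc : 0 < c) (hq0 : 0 < q) (hq1 : q < 1) (hγ : 0 < γ) :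
    0 < ρE c q γ := by
  have h1 := fE_pos c γ
  have h2 := fE_lt_one hc hγ
  exact div_pos (mul_pos hq0 (by linarith)) (mul_pos (by linarith) h1)

lemma ρE_lt {c q γ1 γ2 : ℝ} (hc : 0 < c) (hq0 : 0 < q) (hq1 : q < 1)
    (h1 : 0 < γ1) (h12 : γ1 < γ2) : ρE c q γ2 < ρE c q γ1 := by
  have hf1 := fE_pos c γ1
  have hf2 := fE_pos c γ2
  have hlt := fE_lt hc h1 h12
  have hone := fE_lt_one hc (h1.trans h12)
  unfold ρE
  rw [div_lt_div_iff₀ (mul_pos (by linarith) hf2) (mul_pos (by linarith) hf1)]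
  nlinarith [mul_pos hq0 (sub_pos.mpr hlt), mul_pos hf1 hf2]

lemma sumE_pos {r : ℝ} (K : ℕ) (hr : 0 < r) :
    0 < ∑ m ∈ Finset.range (K + 1), r ^ m :=
  Finset.sum_pos (fun m _ => pow_pos hr m) ⟨0, Finset.mem_range.mpr (Nat.succ_pos K)⟩

lemma PiE_pos {r : ℝ} (K : ℕ) (hr : 0 < r) : 0 < PiE K r :=
  div_pos (pow_pos hr K) (sumE_pos K hr)

lemma PiE_lt_one {r : ℝ} {K : ℕ} (hK : 1 ≤ K) (hr : 0 < r) : PiE K r < 1 := by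
  rw [PiE, div_lt_one (sumE_pos K hr)]
  have h0 : (0 : ℕ) ∈ Finset.range (K + 1) := Finset.mem_range.mpr (Nat.succ_pos K)
  have hKm : K ∈ Finset.range (K + 1) := Finset.mem_range.mpr (Nat.lt_succ_self K)
  calc r ^ K = ∑ m ∈ {K}, r ^ m := by simp
    _ < ∑ m ∈ Finset.range (K + 1), r ^ m := by
        apply Finset.sum_lt_sum_of_subset (by simpa using hKm) h0
          (by simp; omega) (pow_pos hr 0)
        intro m _ _
        exact (pow_pos hr m).le

lemma PiE_lt {r1 r2 : ℝ} {K : ℕ} (hK : 1 ≤ K) (hr2 : 0 < r2) (h12 : r2 < r1) :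
    PiE K r2 < PiE K r1 := by
  have hr1 : 0 < r1 := hr2.trans h12
  rw [PiE, PiE, div_lt_div_iff₀ (sumE_pos K hr2) (sumE_pos K hr1),
    Finset.mul_sum, Finset.mul_sum]
  apply Finset.sum_lt_sum
  · intro m hm
    have hm' : m ≤ K := Nat.lt_succ_iff.mp (Finset.mem_range.mp hm)
    have key : r2 ^ (K - m) ≤ r1 ^ (K - m) := pow_le_pow_left₀ hr2.le h12.le _
    have e2 : r2 ^ K = r2 ^ m * r2 ^ (K - m) := by
      rw [← pow_add, Nat.add_sub_cancel' hm']
    have e1 : r1 ^ K = r1 ^ m * r1 ^ (K - m) := by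
      rw [← pow_add, Nat.add_sub_cancel' hm']
    rw [e2, e1]
    calc r2 ^ m * r2 ^ (K - m) * r1 ^ m = r2 ^ m * r1 ^ m * r2 ^ (K - m) := by ring
      _ ≤ r2 ^ m * r1 ^ m * r1 ^ (K - m) := by
          apply mul_le_mul_of_nonneg_left key
          positivity
      _ = r1 ^ m * r1 ^ (K - m) * r2 ^ m := by ring
  · refine ⟨0, Finset.mem_range.mpr (Nat.succ_pos K), ?_⟩
    simpa using pow_lt_pow_left₀ h12 hr2.le (by omega : K ≠ 0)

lemma ΦE_lt_one {c q γ : ℝ} {K : ℕ} (hc : 0 < c) (hq0 : 0 < q) (hq1 : q < 1)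
    (hK : 1 ≤ K) (hγ : 0 < γ) : ΦE c q K γ < 1 := by
  have h1 := fE_pos c γ
  have h2 := fE_lt_one hc hγ
  have h3 := PiE_pos K (ρE_pos hc hq0 hq1 hγ)
  have h4 := PiE_lt_one hK (ρE_pos hc hq0 hq1 hγ)
  unfold ΦE
  nlinarith

lemma ΦE_lt {c q γ1 γ2 : ℝ} {K : ℕ} (hc : 0 < c) (hq0 : 0 < q) (hq1 : q < 1)
    (hK : 1 ≤ K) (h1 : 0 < γ1) (h12 : γ1 < γ2) : ΦE c q K γ2 < ΦE c q K γ1 := by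
  have h2 : 0 < γ2 := h1.trans h12
  have hf1 := fE_pos c γ1
  have hf2 := fE_pos c γ2
  have hflt := fE_lt hc h1 h12
  have hfone := fE_lt_one hc h2
  have hρ2 := ρE_pos hc hq0 hq1 h2
  have hρlt := ρE_lt hc hq0 hq1 h1 h12
  have hP2 := PiE_pos K hρ2
  have hPlt := PiE_lt hK hρ2 hρlt
  unfold ΦE
  nlinarith

lemma frac_mono {R q b pi A1 A2 F1 F2 : ℝ} (hR : 0 < R) (hq0 : 0 < q)
    (hb : 0 < b) (hpi : 0 < pi) (hA1p : 0 < A1) (hAlt : A1 < A2)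
    (hF1p : 0 < F1) (hFlt : F1 < F2) :
    R * q * A1 / (b + pi * q * A1 / F1) < R * q * A2 / (b + pi * q * A2 / F2) := by
  have hA2p : 0 < A2 := hA1p.trans hAlt
  have hF2p : 0 < F2 := hF1p.trans hFlt
  have hD1 : 0 < b + pi * q * A1 / F1 := by positivity
  have hD2 : 0 < b + pi * q * A2 / F2 := by positivity
  rw [div_lt_div_iff₀ hD1 hD2]
  have hdiv : A1 * A2 / F2 < A1 * A2 / F1 :=
    div_lt_div_of_pos_left (mul_pos hA1p hA2p) hF1p hFlt
  have hb' : A1 * b < A2 * b := mul_lt_mul_of_pos_right hAlt hb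
  have hstep : pi * q * (A1 * A2 / F2) < pi * q * (A1 * A2 / F1) :=
    mul_lt_mul_of_pos_left hdiv (mul_pos hpi hq0)
  have key : A1 * (b + pi * q * A2 / F2) < A2 * (b + pi * q * A1 / F1) := by
    calc A1 * (b + pi * q * A2 / F2) = A1 * b + pi * q * (A1 * A2 / F2) := by ring
      _ < A2 * b + pi * q * (A1 * A2 / F1) := by linarith
      _ = A2 * (b + pi * q * A1 / F1) := by ring
  calc R * q * A1 * (b + pi * q * A2 / F2)
      = R * q * (A1 * (b + pi * q * A2 / F2)) := by ring
    _ < R * q * (A2 * (b + pi * q * A1 / F1)) :=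
        mul_lt_mul_of_pos_left key (mul_pos hR hq0)
    _ = R * q * A2 * (b + pi * q * A1 / F1) := by ring

/-- Core monotonicity: the EE as a function of the SINR is strictly increasing. -/
lemma chi_mono {c q R b pi γ1 γ2 : ℝ} {K : ℕ} (hc : 0 < c) (hq0 : 0 < q)
    (hq1 : q < 1) (hK : 1 ≤ K) (hR : 0 < R) (hb : 0 < b) (hpi : 0 < pi)
    (h1 : 0 < γ1) (h12 : γ1 < γ2) :
    R * q * (1 - ΦE c q K γ1) / (b + pi * q * (1 - ΦE c q K γ1) / fE c γ1) <
      R * q * (1 - ΦE c q K γ2) / (b + pi * q * (1 - ΦE c q K γ2) / fE c γ2) := by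
  have h2 : 0 < γ2 := h1.trans h12
  have hA1p : 0 < 1 - ΦE c q K γ1 := by
    have := ΦE_lt_one hc hq0 hq1 hK h1; linarith
  have hAlt : 1 - ΦE c q K γ1 < 1 - ΦE c q K γ2 := by
    have := ΦE_lt hc hq0 hq1 hK h1 h12; linarith
  exact frac_mono hR hq0 hb hpi hA1p hAlt (fE_pos c γ1) (fE_lt hc h1 h12)

theorem cross_layer_ee_decreasing_in_opponent_power
    (N : ℕ) (hN : 2 ≤ N) (c : ℝ) (hc : 0 < c)
    (q : ℝ) (hq0 : 0 < q) (hq1 : q < 1) (K : ℕ) (hK : 1 ≤ K)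
    (R b σ2 : ℝ) (hR : 0 < R) (hb : 0 < b) (hσ : 0 < σ2)
    (h : Fin N → ℝ) (hh : ∀ i, 0 < h i)
    (f ρ PiK Φ : ℝ → ℝ)
    (hf : ∀ γ : ℝ, f γ = Real.exp (-c / γ))
    (hρ : ∀ γ : ℝ, ρ γ = q * (1 - f γ) / ((1 - q) * f γ))
    (hPi : ∀ r : ℝ, PiK r = r ^ K / ∑ m ∈ Finset.range (K + 1), r ^ m)
    (hΦ : ∀ γ : ℝ, Φ γ = (1 - f γ) * PiK (ρ γ))
    (γfun : (Fin N → ℝ) → Fin N → ℝ)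
    (hγ : ∀ (P : Fin N → ℝ) (i : Fin N),
      γfun P i = P i * h i / (σ2 + ∑ j ∈ Finset.univ.erase i, P j * h j))
    (χ : (Fin N → ℝ) → Fin N → ℝ)
    (hχ : ∀ (P : Fin N → ℝ) (i : Fin N),
      χ P i = R * q * (1 - Φ (γfun P i)) /
        (b + P i * q * (1 - Φ (γfun P i)) / f (γfun P i)))
    (p : Fin N → ℝ) (hp : ∀ k, 0 ≤ p k)
    (i j : Fin N) (hij : j ≠ i) (hpi : 0 < p i) :
    StrictAntiOn (fun x : ℝ => χ (Function.update p j x) i) (Set.Ici 0) := by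
  -- Rewrite the abstract functions through my concrete definitions
  have hfE : ∀ γ, f γ = fE c γ := fun γ => hf γ
  have hΦE : ∀ γ, Φ γ = ΦE c q K γ := by
    intro γ
    rw [hΦ, hPi, hρ]
    simp only [ΦE, PiE, ρE, fE, hfE]
  -- the constant part of the interference
  set C : ℝ := ∑ k ∈ (Finset.univ.erase i).erase j, p k * h k with hC
  have hC0 : 0 ≤ C := Finset.sum_nonneg fun k _ => mul_nonneg (hp k) (hh k).le
  have hjmem : j ∈ Finset.univ.erase i := Finset.mem_erase.mpr ⟨hij, Finset.mem_univ j⟩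
  have hsum : ∀ x : ℝ, ∑ k ∈ Finset.univ.erase i, Function.update p j x k * h k
      = x * h j + C := by
    intro x
    rw [← Finset.add_sum_erase _ _ hjmem]
    congr 1
    · simp
    · apply Finset.sum_congr rfl
      intro k hk
      have : k ≠ j := (Finset.mem_erase.mp hk).1
      rw [Function.update_of_ne this]
  have hγx : ∀ x : ℝ, γfun (Function.update p j x) i
      = p i * h i / (σ2 + (x * h j + C)) := by
    intro x
    rw [hγ, hsum, Function.update_of_ne (Ne.symm hij)]
  intro x hx y hy hxy
  simp only [Set.mem_Ici] at hx hy
  have hDx : 0 < σ2 + (x * h j + C) := by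
    have := mul_nonneg hx (hh j).le; linarith
  have hDy : 0 < σ2 + (y * h j + C) := by
    have := mul_nonneg hy (hh j).le; linarith
  have hnum : 0 < p i * h i := mul_pos hpi (hh i)
  have hγy_pos : 0 < p i * h i / (σ2 + (y * h j + C)) := div_pos hnum hDy
  have hγlt : p i * h i / (σ2 + (y * h j + C)) < p i * h i / (σ2 + (x * h j + C)) := by
    apply div_lt_div_of_pos_left hnum hDx
    have : x * h j < y * h j := mul_lt_mul_of_pos_right hxy (hh j)
    linarith
  simp only [hχ, hΦE, hfE, hγx, Function.update_of_ne (Ne.symm hij)]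
  exact chi_mono hc hq0 hq1 hK hR hb hpi hγy_pos hγlt
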